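/- Let (X,‖·|) be an asymmetric normed space with induced asymmetric distance d(x,y) = ‖y−x|, let K ⊆ X be a nonempty convex subset that is f-compact (compact in the forward topology of d), and suppose f-convergence implies b-convergence in X. If T : K → K is f-non-expansive, i.e. ‖Ty − Tx| ≤ ‖y − x| for all x,y ∈ K, then T has a fixed point in K. -/

import Mathlib

open Filter Topology

section Asym

variable {X : Type*} [AddCommGroup X] [Module ℝ X]

lemma asym_n_zero (n : X → ℝ)
    (h_hom : ∀ (l : ℝ), 0 ≤ l → ∀ x, n (l • x) = l * n x) : n 0 = 0 := by
  have := h_hom 0 le_rfl 0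
  simpa using this

lemma asym_ball_mem_nhds (n : X → ℝ)
    (h_hom : ∀ (l : ℝ), 0 ≤ l → ∀ x, n (l • x) = l * n x)
    (tf : TopologicalSpace X)
    (htf : tf = TopologicalSpace.generateFrom
      {s : Set X | ∃ x r, s = {u | n (u - x) < r}})
    (x : X) {r : ℝ} (hr : 0 < r) :
    {u : X | n (u - x) < r} ∈ @nhds X tf x := by
  have hopen : @IsOpen X tf {u : X | n (u - x) < r} := by
    rw [htf]
    exact TopologicalSpace.isOpen_generateFrom_of_mem ⟨x, r, rfl⟩
  have hx : x ∈ {u : X | n (u - x) < r} := by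
    simp only [Set.mem_setOf_eq, sub_self, asym_n_zero n h_hom]
    exact hr
  exact hopen.mem_nhds hx

lemma asym_exists_subseq (n : X → ℝ)
    (h_nonneg : ∀ x, 0 ≤ n x)
    (h_hom : ∀ (l : ℝ), 0 ≤ l → ∀ x, n (l • x) = l * n x)
    (tf : TopologicalSpace X)
    (htf : tf = TopologicalSpace.generateFrom
      {s : Set X | ∃ x r, s = {u | n (u - x) < r}})
    (K : Set X) (hK : @IsCompact X tf K) (u : ℕ → X) (hu : ∀ k, u k ∈ K) :
    ∃ x ∈ K, ∃ φ : ℕ → ℕ, StrictMono φ ∧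
      Tendsto (fun k => n (u (φ k) - x)) atTop (𝓝 0) := by
  have hle : Filter.map u atTop ≤ Filter.principal K := by
    rw [le_principal_iff]
    exact Filter.mem_map.2 (Filter.Eventually.of_forall hu)
  obtain ⟨x, hxK, hx⟩ := hK.exists_clusterPt hle
  refine ⟨x, hxK, ?_⟩
  have hfreq : ∀ k : ℕ, ∃ᶠ m in atTop, n (u m - x) < 1 / (k + 1) := by
    intro k
    have hball := asym_ball_mem_nhds n h_hom tf htf x
      (r := 1 / (k + 1)) (by positivity)
    have hx' : MapClusterPt x atTop u := hx
    exact (mapClusterPt_iff_frequently.1 hx') _ hball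
  obtain ⟨φ, hφmono, hφ⟩ := Filter.extraction_forall_of_frequently hfreq
  refine ⟨φ, hφmono, ?_⟩
  refine squeeze_zero (fun k => h_nonneg _) (fun k => (hφ k).le) ?_
  exact tendsto_one_div_add_atTop_nhds_zero_nat

lemma asym_symm_zero (n : X → ℝ)
    (h_fb : ∀ (u : ℕ → X) (x : X),
      Tendsto (fun k => n (u k - x)) atTop (𝓝 0) →
      Tendsto (fun k => n (x - u k)) atTop (𝓝 0))
    {a b : X} (h : n (b - a) = 0) : n (a - b) = 0 := by
  have h1 : Tendsto (fun _ : ℕ => n (b - a)) atTop (𝓝 0) := by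
    rw [h]; exact tendsto_const_nhds
  have h2 := h_fb (fun _ => b) a h1
  exact tendsto_nhds_unique tendsto_const_nhds h2

lemma asym_key (n : X → ℝ)
    (h_nonneg : ∀ x, 0 ≤ n x)
    (h_eq : ∀ x, (n x = 0 ∧ n (-x) = 0) ↔ x = 0)
    (h_hom : ∀ (l : ℝ), 0 ≤ l → ∀ x, n (l • x) = l * n x)
    (h_sub : ∀ x y, n (x + y) ≤ n x + n y)
    (tf : TopologicalSpace X)
    (htf : tf = TopologicalSpace.generateFrom
      {s : Set X | ∃ x r, s = {u | n (u - x) < r}})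
    (h_fb : ∀ (u : ℕ → X) (x : X),
      Tendsto (fun k => n (u k - x)) atTop (𝓝 0) →
      Tendsto (fun k => n (x - u k)) atTop (𝓝 0))
    (K : Set X) (hK_cpt : @IsCompact X tf K)
    (S : X → X)
    (hS : ∀ x ∈ K, ∀ y ∈ K, n (S y - S x) ≤ n (y - x))
    (u : ℕ → X) (hu : ∀ k, u k ∈ K)
    (hreg : Tendsto (fun k => n (S (u k) - u k)) atTop (𝓝 0)) :
    ∃ z ∈ K, S z = z := by
  obtain ⟨z, hzK, φ, hφmono, hφ⟩ :=
    asym_exists_subseq n h_nonneg h_hom tf htf K hK_cpt u hu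
  have hb : Tendsto (fun k => n (z - u (φ k))) atTop (𝓝 0) :=
    h_fb (fun k => u (φ k)) z hφ
  have hreg' : Tendsto (fun k => n (S (u (φ k)) - u (φ k))) atTop (𝓝 0) :=
    hreg.comp hφmono.tendsto_atTop
  have hbound : ∀ k, n (S z - z) ≤
      n (z - u (φ k)) + (n (S (u (φ k)) - u (φ k)) + n (u (φ k) - z)) := by
    intro k
    have hdecomp : S z - z =
        (S z - S (u (φ k))) + ((S (u (φ k)) - u (φ k)) + (u (φ k) - z)) := by
      abel
    calc n (S z - z) ≤ n (S z - S (u (φ k))) +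
          n ((S (u (φ k)) - u (φ k)) + (u (φ k) - z)) := by
          rw [hdecomp]; exact h_sub _ _
      _ ≤ n (S z - S (u (φ k))) +
          (n (S (u (φ k)) - u (φ k)) + n (u (φ k) - z)) := by
          exact add_le_add_right (h_sub _ _) _
      _ ≤ n (z - u (φ k)) +
          (n (S (u (φ k)) - u (φ k)) + n (u (φ k) - z)) := by
          exact add_le_add_left (hS (u (φ k)) (hu _) z hzK) _
  have htend : Tendsto (fun k => n (z - u (φ k)) +
      (n (S (u (φ k)) - u (φ k)) + n (u (φ k) - z))) atTop (𝓝 0) := by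
    have := hb.add (hreg'.add hφ)
    simpa using this
  have hle0 : n (S z - z) ≤ 0 :=
    ge_of_tendsto htend (Filter.Eventually.of_forall hbound)
  have h1 : n (S z - z) = 0 := le_antisymm hle0 (h_nonneg _)
  have h2 : n (z - S z) = 0 := asym_symm_zero n h_fb h1
  have := (h_eq (S z - z)).1 ⟨h1, by rwa [neg_sub]⟩
  exact ⟨z, hzK, by rwa [sub_eq_zero] at this⟩

lemma asym_banach (n : X → ℝ)
    (h_nonneg : ∀ x, 0 ≤ n x)
    (h_eq : ∀ x, (n x = 0 ∧ n (-x) = 0) ↔ x = 0)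
    (h_hom : ∀ (l : ℝ), 0 ≤ l → ∀ x, n (l • x) = l * n x)
    (h_sub : ∀ x y, n (x + y) ≤ n x + n y)
    (tf : TopologicalSpace X)
    (htf : tf = TopologicalSpace.generateFrom
      {s : Set X | ∃ x r, s = {u | n (u - x) < r}})
    (h_fb : ∀ (u : ℕ → X) (x : X),
      Tendsto (fun k => n (u k - x)) atTop (𝓝 0) →
      Tendsto (fun k => n (x - u k)) atTop (𝓝 0))
    (K : Set X) (hK_ne : K.Nonempty) (hK_cpt : @IsCompact X tf K)
    (S : X → X) (hS_maps : Set.MapsTo S K K)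
    (c : ℝ) (hc0 : 0 ≤ c) (hc1 : c < 1)
    (hS : ∀ x ∈ K, ∀ y ∈ K, n (S y - S x) ≤ c * n (y - x)) :
    ∃ z ∈ K, S z = z := by
  obtain ⟨x₀, hx₀⟩ := hK_ne
  set u : ℕ → X := fun k => S^[k] x₀ with hudef
  have hu : ∀ k, u k ∈ K := by
    intro k
    induction k with
    | zero => exact hx₀
    | succ k ih =>
      have : u (k + 1) = S (u k) := Function.iterate_succ_apply' S k x₀
      rw [this]; exact hS_maps ih
  have husucc : ∀ k, u (k + 1) = S (u k) := fun k => Function.iterate_succ_apply' S k x₀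
  have hbound : ∀ k, n (u (k + 1) - u k) ≤ c ^ k * n (u 1 - u 0) := by
    intro k
    induction k with
    | zero => simp
    | succ k ih =>
      have h1 : n (u (k + 2) - u (k + 1)) ≤ c * n (u (k + 1) - u k) := by
        have := hS (u k) (hu k) (u (k + 1)) (hu (k + 1))
        rwa [← husucc (k + 1), ← husucc k] at this
      calc n (u (k + 2) - u (k + 1)) ≤ c * n (u (k + 1) - u k) := h1
        _ ≤ c * (c ^ k * n (u 1 - u 0)) := by
            exact mul_le_mul_of_nonneg_left ih hc0
        _ = c ^ (k + 1) * n (u 1 - u 0) := by ring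
  have hS1 : ∀ x ∈ K, ∀ y ∈ K, n (S y - S x) ≤ n (y - x) := by
    intro x hx y hy
    calc n (S y - S x) ≤ c * n (y - x) := hS x hx y hy
      _ ≤ 1 * n (y - x) := mul_le_mul_of_nonneg_right hc1.le (h_nonneg _)
      _ = n (y - x) := one_mul _
  have hreg : Tendsto (fun k => n (S (u k) - u k)) atTop (𝓝 0) := by
    have hb : ∀ k, n (S (u k) - u k) ≤ c ^ k * n (u 1 - u 0) := by
      intro k
      have := hbound k
      rwa [husucc k] at this
    refine squeeze_zero (fun k => h_nonneg _) hb ?_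
    have := (tendsto_pow_atTop_nhds_zero_of_lt_one hc0 hc1).mul_const (n (u 1 - u 0))
    simpa using this
  exact asym_key n h_nonneg h_eq h_hom h_sub tf htf h_fb K hK_cpt S hS1 u hu hreg

end Asym

/-- Schauder type: an f-non-expansive self-map of a nonempty
convex f-compact subset of an asymmetric normed space (in which f-convergence
implies b-convergence) has a fixed point. -/
theorem fixedPoint_schauder {X : Type*} [AddCommGroup X] [Module ℝ X]
    (n : X → ℝ)
    (h_nonneg : ∀ x, 0 ≤ n x)
    (h_eq : ∀ x, (n x = 0 ∧ n (-x) = 0) ↔ x = 0)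
    (h_hom : ∀ (l : ℝ), 0 ≤ l → ∀ x, n (l • x) = l * n x)
    (h_sub : ∀ x y, n (x + y) ≤ n x + n y)
    (tf : TopologicalSpace X)
    (htf : tf = TopologicalSpace.generateFrom
      {s : Set X | ∃ x r, s = {u | n (u - x) < r}})
    (h_fb : ∀ (u : ℕ → X) (x : X),
      Tendsto (fun k => n (u k - x)) atTop (𝓝 0) →
      Tendsto (fun k => n (x - u k)) atTop (𝓝 0))
    (K : Set X) (hK_ne : K.Nonempty) (hK_conv : Convex ℝ K)
    (hK_cpt : @IsCompact X tf K)
    (T : X → X) (hT_maps : Set.MapsTo T K K)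
    (hT_nonexp : ∀ x ∈ K, ∀ y ∈ K, n (T y - T x) ≤ n (y - x)) :
    ∃ x ∈ K, T x = x := by
  obtain ⟨x₀, hx₀⟩ := hK_ne
  -- a uniform bound for n (u - x₀) on K
  obtain ⟨M, hM⟩ : ∃ M : ℝ, ∀ u ∈ K, n (u - x₀) ≤ M := by
    have hopen : ∀ r : ℕ, @IsOpen X tf {u : X | n (u - x₀) < r} := by
      intro r
      rw [htf]
      exact TopologicalSpace.isOpen_generateFrom_of_mem ⟨x₀, r, rfl⟩
    have hcover : K ⊆ ⋃ r : ℕ, {u : X | n (u - x₀) < r} := by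
      intro u _
      refine Set.mem_iUnion.2 ⟨⌈n (u - x₀)⌉₊ + 1, ?_⟩
      have h1 : n (u - x₀) ≤ ⌈n (u - x₀)⌉₊ := Nat.le_ceil _
      have : (⌈n (u - x₀)⌉₊ : ℝ) < ((⌈n (u - x₀)⌉₊ + 1 : ℕ) : ℝ) := by
        push_cast; linarith
      exact lt_of_le_of_lt h1 this
    obtain ⟨t, ht⟩ := hK_cpt.elim_finite_subcover _ hopen hcover
    refine ⟨(t.sup id : ℕ), fun u hu => ?_⟩
    obtain ⟨i, hi, hui⟩ := Set.mem_iUnion₂.1 (ht hu)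
    have : (i : ℝ) ≤ ((t.sup id : ℕ) : ℝ) := by
      exact_mod_cast Finset.le_sup (f := id) hi
    exact le_trans (le_of_lt hui) this
  -- approximate fixed points
  have hfix : ∀ m : ℕ, ∃ z ∈ K,
      (1 - 1 / ((m : ℝ) + 1)) • T z + (1 / ((m : ℝ) + 1)) • x₀ = z := by
    intro m
    set ε : ℝ := 1 / ((m : ℝ) + 1) with hε
    have hε0 : 0 < ε := by positivity
    have hε1 : ε ≤ 1 := by
      rw [hε]
      rw [div_le_one (by positivity)]
      linarith [Nat.cast_nonneg (α := ℝ) m]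
    set S : X → X := fun x => (1 - ε) • T x + ε • x₀ with hS
    have hS_maps : Set.MapsTo S K K := by
      intro x hx
      exact hK_conv (hT_maps hx) hx₀ (by linarith) hε0.le (by ring)
    have hS_contr : ∀ x ∈ K, ∀ y ∈ K, n (S y - S x) ≤ (1 - ε) * n (y - x) := by
      intro x hx y hy
      have hdiff : S y - S x = (1 - ε) • (T y - T x) := by
        simp only [hS, smul_sub]
        abel
      rw [hdiff, h_hom (1 - ε) (by linarith) _]
      exact mul_le_mul_of_nonneg_left (hT_nonexp x hx y hy) (by linarith)
    exact asym_banach n h_nonneg h_eq h_hom h_sub tf htf h_fb K ⟨x₀, hx₀⟩ hK_cpt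
      S hS_maps (1 - ε) (by linarith) (by linarith) hS_contr
  choose v hvK hv using hfix
  -- v m is an approximate fixed point of T
  have hreg : Tendsto (fun m => n (T (v m) - v m)) atTop (𝓝 0) := by
    have hb : ∀ m : ℕ, n (T (v m) - v m) ≤ (1 / ((m : ℝ) + 1)) * M := by
      intro m
      set ε : ℝ := 1 / ((m : ℝ) + 1) with hε
      have hε0 : 0 < ε := by positivity
      have hdiff : T (v m) - v m = ε • (T (v m) - x₀) := by
        nth_rewrite 2 [← hv m]
        rw [smul_sub, sub_smul, one_smul]
        abel
      rw [hdiff, h_hom ε hε0.le _]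
      exact mul_le_mul_of_nonneg_left (hM _ (hT_maps (hvK m))) hε0.le
    refine squeeze_zero (fun m => h_nonneg _) hb ?_
    have := tendsto_one_div_add_atTop_nhds_zero_nat.mul_const M
    simpa using this
  exact asym_key n h_nonneg h_eq h_hom h_sub tf htf h_fb K hK_cpt T hT_nonexp v hvK hreg
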